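/- Let p be prime and let X ⊆ 𝔽_p and m a positive integer such that |mX| < min(33·m·|X|, (p-1)/8), where mX denotes the m-fold sumset of X. If mX is contained in an arithmetic progression (in 𝔽_p) of at most 2|mX| terms, then X is contained in an arithmetic progression of at most 132|X| terms. -/
import Mathlib

open Finset Pointwise

/-- The m-fold iterated sumset of a finite set (with `iterSumset 0 X = {0}`). -/
def iterSumset {α : Type*} [AddCommMonoid α] [DecidableEq α] :
    ℕ → Finset α → Finset α
  | 0, _ => {0}
  | n + 1, X => iterSumset n X + X

lemma iterSumset_succ {α : Type*} [AddCommMonoid α] [DecidableEq α] (n : ℕ) (X : Finset α) :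
    iterSumset (n + 1) X = iterSumset n X + X := rfl

lemma smul_add_smul_mem_iterSumset {α : Type*} [AddCommMonoid α] [DecidableEq α]
    {X : Finset α} {u v : α} (hu : u ∈ X) (hv : v ∈ X) :
    ∀ m j : ℕ, j ≤ m → j • u + (m - j) • v ∈ iterSumset m X := by
  intro m
  induction m with
  | zero =>
    intro j hj
    interval_cases j
    simp [iterSumset]
  | succ m ih =>
    intro j hj
    rw [iterSumset_succ]
    rcases Nat.eq_or_lt_of_le hj with h | h
    · subst h
      have he : (m + 1) • u + (m + 1 - (m + 1)) • v = (m • u + (m - m) • v) + u := by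
        simp [succ_nsmul, add_assoc]
      rw [he]
      exact Finset.add_mem_add (ih m le_rfl) hu
    · have hj' : j ≤ m := Nat.lt_succ_iff.mp h
      have he : j • u + (m + 1 - j) • v = (j • u + (m - j) • v) + v := by
        rw [show m + 1 - j = (m - j) + 1 from by omega, succ_nsmul, add_assoc]
      rw [he]
      exact Finset.add_mem_add (ih j hj') hv

lemma int_eq_of_cast_eq {p : ℕ} (_hp : 0 < p) {c₁ c₂ : ℤ}
    (h : (c₁ : ZMod p) = (c₂ : ZMod p)) (hlt : c₁.natAbs + c₂.natAbs < p) : c₁ = c₂ := by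
  have hd : (p : ℤ) ∣ c₂ - c₁ := ((ZMod.intCast_eq_intCast_iff _ _ _).mp h).dvd
  have h0 : c₂ - c₁ = 0 := by
    refine Int.eq_zero_of_abs_lt_dvd hd ?_
    rw [Int.abs_eq_natAbs]
    omega
  omega

/-- If |mX| < min(33 m |X|, (p-1)/8) and mX is contained in an arithmetic
progression of at most 2|mX| terms, then X is contained in an arithmetic
progression of at most 132|X| terms. -/
theorem contained_in_short_progression
    (p : ℕ) [Fact p.Prime] (X : Finset (ZMod p)) (m : ℕ) (hm : 1 ≤ m)
    (hcard₁ : (iterSumset m X).card < 33 * m * X.card)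
    (hcard₂ : 8 * (iterSumset m X).card < p - 1)
    (hAP : ∃ (a d : ZMod p) (n : ℕ), n ≤ 2 * (iterSumset m X).card ∧
      iterSumset m X ⊆ (Finset.range n).image (fun i : ℕ => a + (i : ZMod p) * d)) :
    ∃ a d : ZMod p,
      X ⊆ (Finset.range (132 * X.card)).image (fun i : ℕ => a + (i : ZMod p) * d) := by
  obtain ⟨a, d, n, hn, hsub⟩ := hAP
  rcases X.eq_empty_or_nonempty with rfl | ⟨x₀, hx₀⟩
  · exact ⟨0, 0, by simp⟩
  have hp2 : 2 ≤ p := (Fact.out : p.Prime).two_le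
  set k := X.card with hk_def
  have hk : 1 ≤ k := Finset.card_pos.mpr ⟨x₀, hx₀⟩
  have hrep : ∀ z ∈ iterSumset m X, ∃ i : ℕ, i < n ∧ z = a + (i : ZMod p) * d := by
    intro z hz
    obtain ⟨i, hi, he⟩ := Finset.mem_image.mp (hsub hz)
    exact ⟨i, Finset.mem_range.mp hi, he.symm⟩
  -- n ≥ 1
  have hn1 : 1 ≤ n := by
    obtain ⟨i, hi, -⟩ := hrep _ (smul_add_smul_mem_iterSumset hx₀ hx₀ m 0 (Nat.zero_le m))
    omega
  have hm1 : m - 1 + 1 = m := by omega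
  by_cases hd : d = 0
  · -- degenerate AP : X is a single point
    have hsingle : ∀ u ∈ X, u = x₀ := by
      intro u hu
      obtain ⟨i1, -, e1⟩ := hrep _ (smul_add_smul_mem_iterSumset hu hx₀ m 1 hm)
      obtain ⟨i0, -, e0⟩ := hrep _ (smul_add_smul_mem_iterSumset hu hx₀ m 0 (Nat.zero_le m))
      rw [hd, mul_zero, add_zero] at e1 e0
      have h0 : (m - 1) • x₀ + x₀ = a := by
        rw [← succ_nsmul, hm1]
        simpa using e0
      have h1 : (m - 1) • x₀ + u = a := by
        rw [add_comm]
        simpa using e1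
      have := h1.trans h0.symm
      exact add_left_cancel this
    refine ⟨x₀, 0, ?_⟩
    intro x hx
    rw [Finset.mem_image]
    exact ⟨0, Finset.mem_range.mpr (by omega), by rw [hsingle x hx]; simp⟩
  -- main case
  have hdd : d⁻¹ * d = 1 := inv_mul_cancel₀ hd
  have stepA : ∀ z₁ ∈ iterSumset m X, ∀ z₂ ∈ iterSumset m X,
      ∃ c : ℤ, ((c : ZMod p) = (z₁ - z₂) * d⁻¹) ∧ c.natAbs + 1 ≤ n := by
    intro z₁ h₁ z₂ h₂
    obtain ⟨i₁, hi₁, e₁⟩ := hrep z₁ h₁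
    obtain ⟨i₂, hi₂, e₂⟩ := hrep z₂ h₂
    refine ⟨(i₁ : ℤ) - (i₂ : ℤ), ?_, by omega⟩
    rw [e₁, e₂]
    push_cast
    have : (a + (i₁ : ZMod p) * d) - (a + (i₂ : ZMod p) * d)
        = ((i₁ : ZMod p) - (i₂ : ZMod p)) * d := by ring
    rw [this, mul_assoc, mul_comm d d⁻¹, hdd, mul_one]
  have hplarge : 4 * n + 1 ≤ p := by omega
  have key : ∀ u ∈ X, ∃ c : ℤ, ((c : ZMod p) = (u - x₀) * d⁻¹) ∧ c.natAbs ≤ 66 * k - 1 := by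
    intro u hu
    have hsj : ∀ j, j ≤ m → j • u + (m - j) • x₀ ∈ iterSumset m X :=
      fun j hj => smul_add_smul_mem_iterSumset hu hx₀ m j hj
    have hdiff : ∀ j : ℕ, j ≤ m →
        (j • u + (m - j) • x₀) - (0 • u + (m - 0) • x₀) = (j : ZMod p) * (u - x₀) := by
      intro j hj
      have h2 : m • x₀ = (m - j) • x₀ + j • x₀ := by
        rw [← add_nsmul]
        congr 1
        omega
      simp only [zero_nsmul, zero_add, Nat.sub_zero, h2, nsmul_eq_mul]
      ring
    obtain ⟨c, hc, hcle⟩ := stepA _ (hsj 1 hm) _ (hsj 0 (Nat.zero_le m))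
    have hc' : (c : ZMod p) = (u - x₀) * d⁻¹ := by
      rw [hc, hdiff 1 hm]
      push_cast
      ring
    have ind : ∀ j : ℕ, j ≤ m → j * c.natAbs + 1 ≤ n := by
      intro j
      induction j with
      | zero => intro _; omega
      | succ j ih =>
        intro hjm
        have hj : j ≤ m := Nat.le_of_succ_le hjm
        have h1 := ih hj
        obtain ⟨f, hf, hfle⟩ := stepA _ (hsj (j + 1) hjm) _ (hsj 0 (Nat.zero_le m))
        have hcast : ((((j : ℤ) + 1) * c : ℤ) : ZMod p) = (f : ZMod p) := by
          rw [hf, hdiff (j + 1) hjm]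
          push_cast
          rw [hc']
          ring
        have hj1 : ((j : ℤ) + 1).natAbs = j + 1 := by omega
        have hna : (((j : ℤ) + 1) * c).natAbs = (j + 1) * c.natAbs := by
          rw [Int.natAbs_mul, hj1]
        have heq : ((j : ℤ) + 1) * c = f := by
          refine int_eq_of_cast_eq (by omega) hcast ?_
          have hle : (j + 1) * c.natAbs = j * c.natAbs + c.natAbs := by ring
          omega
        omega
    have hfin := ind m le_rfl
    -- m * |c| + 1 ≤ n ≤ 2 * |mX| ≤ 2 * (33 m k - 1)
    have he1 : 66 * m * k = 2 * (33 * m * k) := by ring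
    have he2 : 66 * m * k = m * (66 * k) := by ring
    have h3 : m * c.natAbs < m * (66 * k) := by omega
    have h4 : c.natAbs < 66 * k := Nat.lt_of_mul_lt_mul_left h3
    exact ⟨c, hc', by omega⟩
  refine ⟨x₀ - ((66 * (k : ℤ) - 1 : ℤ) : ZMod p) * d, d, ?_⟩
  intro x hx
  obtain ⟨c, hc, hbound⟩ := key x hx
  rw [Finset.mem_image]
  have h0 : (0 : ℤ) ≤ c + (66 * (k : ℤ) - 1) := by omega
  refine ⟨(c + (66 * (k : ℤ) - 1)).toNat, Finset.mem_range.mpr (by omega), ?_⟩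
  have hcast : (((c + (66 * (k : ℤ) - 1)).toNat : ℕ) : ZMod p)
      = ((c + (66 * (k : ℤ) - 1) : ℤ) : ZMod p) := by
    rw [← Int.cast_natCast, Int.toNat_of_nonneg h0]
  rw [hcast]
  push_cast
  linear_combination d * hc + (x - x₀) * hdd
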